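/- In ONH_n with the local differential (d(x_i) = x_i², d(∂_i) = 1), the idempotent 𝚎_n = (−1)^{binom(n,3)} ∂_{w_0} x^δ satisfies d(𝚎_n) = Σ_{i=1}^n {i−1} x_i 𝚎_n. -/

import Mathlib

/-- The (0-indexed) word `∂_1(∂_2∂_1)⋯(∂_{n−1}⋯∂_1)` of simple indices defining
the longest odd divided difference operator `∂_{w_0}`. -/
def w0List : ℕ → List ℕ
  | 0 => []
  | n + 1 => w0List n ++ (List.range n).reverse

/-- The staircase monomial `x^δ = x_1^{n−1} x_2^{n−2} ⋯ x_{n−1}`. -/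
noncomputable def xDeltaN {A : Type*} [Ring A] (n : ℕ) (x : ℕ → A) : A :=
  ((List.range n).map fun i => x i ^ (n - 1 - i)).prod

/-- The element `𝚎_n = (−1)^{C(n,3)} ∂_{w_0} x^δ` of the odd nilHecke algebra. -/
noncomputable def onhIdem {A : Type*} [Ring A] (n : ℕ) (x D : ℕ → A) : A :=
  (-1 : A) ^ (n.choose 3) * (((w0List n).map D).prod * xDeltaN n x)

namespace S9

variable {A : Type*} [Ring A]

def Vv (D : ℕ → A) (m : ℕ) : A := ((List.range m).reverse.map D).prod
def Aseg (D : ℕ → A) (k m : ℕ) : A := ((List.range' k (m - k)).reverse.map D).prod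
def Ws (D : ℕ → A) (m : ℕ) : A := ((w0List m).map D).prod
def br (k : ℕ) : A := if Even k then 0 else 1
def sg (k : ℕ) : A := (-1) ^ k

lemma sg_comm (k : ℕ) (a : A) : sg k * a = a * sg k := by
  rcases Nat.even_or_odd k with h | h
  · simp [sg, h.neg_one_pow]
  · simp [sg, h.neg_one_pow]

lemma sg_mul_self (k : ℕ) : (sg k : A) * sg k = 1 := by
  simp [sg, ← pow_add, Even.neg_one_pow ⟨k, rfl⟩]

lemma sg_succ (k : ℕ) : (sg (k+1) : A) = - sg k := by
  simp [sg, pow_succ]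

lemma sg_add (j k : ℕ) : (sg (j+k) : A) = sg j * sg k := by simp [sg, pow_add]

lemma br_comm (k : ℕ) (a : A) : br k * a = a * br k := by
  by_cases h : Even k <;> simp [br, h]

lemma br_succ (k : ℕ) : (br (k+1) : A) = 1 - br k := by
  by_cases h : Even k <;> simp [br, h, Nat.even_add_one]

lemma br_add_two (k : ℕ) : (br (k+2) : A) = br k := by
  simp [br_succ]

lemma range_rev_succ (m : ℕ) : (List.range (m+1)).reverse = m :: (List.range m).reverse := by
  simp [List.range_succ]

lemma Vv_zero (D : ℕ → A) : Vv D 0 = 1 := rfl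

lemma Vv_succ (D : ℕ → A) (m : ℕ) : Vv D (m+1) = D m * Vv D m := by
  simp [Vv, range_rev_succ]

lemma Vv_one (D : ℕ → A) : Vv D 1 = D 0 := by simp [Vv_succ, Vv_zero]

lemma Ws_zero (D : ℕ → A) : Ws D 0 = 1 := rfl

lemma Ws_succ (D : ℕ → A) (m : ℕ) : Ws D (m+1) = Ws D m * Vv D m := by
  simp [Ws, w0List, Vv]

lemma Ws_one (D : ℕ → A) : Ws D 1 = 1 := by simp [Ws_succ, Ws_zero, Vv_zero]

lemma w0_len_succ (m : ℕ) : (w0List (m+1)).length = (w0List m).length + m := by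
  simp [w0List]

lemma mem_w0 : ∀ m j, j ∈ w0List m → j + 1 < m := by
  intro m
  induction m with
  | zero => intro j h; simp [w0List] at h
  | succ k ih =>
    intro j h
    simp only [w0List, List.mem_append, List.mem_reverse, List.mem_range] at h
    rcases h with h | h
    · exact lt_trans (ih j h) (Nat.lt_succ_self k)
    · omega

lemma aseg_nil (D : ℕ → A) (k m : ℕ) (h : m ≤ k) : Aseg D k m = 1 := by
  simp [Aseg, Nat.sub_eq_zero_of_le h]

lemma aseg_cons (D : ℕ → A) (k m : ℕ) (h : k < m) :
    Aseg D k m = Aseg D (k+1) m * D k := by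
  have h1 : m - k = (m - (k+1)) + 1 := by omega
  rw [Aseg, h1, List.range'_succ]
  simp [Aseg]

lemma Vv_eq_aseg (D : ℕ → A) (m : ℕ) : Vv D m = Aseg D 0 m := by
  simp [Vv, Aseg, List.range_eq_range']

lemma Vv_aseg_split (D : ℕ → A) (k m : ℕ) (h : k ≤ m) :
    Vv D m = Aseg D k m * Vv D k := by
  have h1 : List.range' 0 k 1 ++ List.range' k (m - k) 1 = List.range' 0 m 1 := by
    have := @List.range'_append 0 k (m - k) 1
    simp at this
    rw [this]; congr 1; omega
  rw [Vv, Vv, Aseg, List.range_eq_range', List.range_eq_range', ← h1]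
  simp


section Rels
variable {A : Type*} [Ring A] {n : ℕ} {x D : ℕ → A} {ι : A →+* A} {d : A → A}

/-- commute `x j` leftwards through a product of `D`'s. -/
lemma prodD_comm_x (hDx : ∀ i j, i + 1 < n → j < n → j ≠ i → j ≠ i + 1 → D i * x j = -(x j * D i))
    (j : ℕ) (hj : j < n) :
    ∀ L : List ℕ, (∀ i ∈ L, i + 1 < n ∧ j ≠ i ∧ j ≠ i + 1) →
      (L.map D).prod * x j = sg L.length * (x j * (L.map D).prod) := by
  intro L
  induction L with
  | nil => simp [sg]
  | cons a L ih =>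
    intro h
    obtain ⟨ha, hL⟩ := List.forall_mem_cons.mp h
    have e1 : D a * x j = -(x j * D a) := hDx a j ha.1 hj ha.2.1 ha.2.2
    calc ((a :: L).map D).prod * x j = D a * ((L.map D).prod * x j) := by
          simp [mul_assoc]
      _ = D a * (sg L.length * (x j * (L.map D).prod)) := by rw [ih hL]
      _ = sg L.length * ((D a * x j) * (L.map D).prod) := by
          rw [← mul_assoc, ← sg_comm, mul_assoc, mul_assoc]
      _ = sg (L.length + 1) * (x j * ((a :: L).map D).prod) := by
          rw [e1, sg_succ]
          simp only [List.map_cons, List.prod_cons, mul_neg, neg_mul, neg_inj]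
          simp [mul_assoc]

/-- commute `D j` leftwards through a product of distant `D`'s. -/
lemma prodD_comm_D (hDD : ∀ i j, i + 1 < n → j + 1 < n → (i + 1 < j ∨ j + 1 < i) →
      D i * D j = -(D j * D i))
    (j : ℕ) (hj : j + 1 < n) :
    ∀ L : List ℕ, (∀ i ∈ L, i + 1 < n ∧ (i + 1 < j ∨ j + 1 < i)) →
      (L.map D).prod * D j = sg L.length * (D j * (L.map D).prod) := by
  intro L
  induction L with
  | nil => simp [sg]
  | cons a L ih =>
    intro h
    obtain ⟨ha, hL⟩ := List.forall_mem_cons.mp h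
    have e1 : D a * D j = -(D j * D a) := hDD a j ha.1 hj ha.2
    calc ((a :: L).map D).prod * D j = D a * ((L.map D).prod * D j) := by
          simp [mul_assoc]
      _ = D a * (sg L.length * (D j * (L.map D).prod)) := by rw [ih hL]
      _ = sg L.length * ((D a * D j) * (L.map D).prod) := by
          rw [← mul_assoc, ← sg_comm, mul_assoc, mul_assoc]
      _ = sg (L.length + 1) * (D j * ((a :: L).map D).prod) := by
          rw [e1, sg_succ]
          simp only [List.map_cons, List.prod_cons, mul_neg, neg_mul, neg_inj]
          simp [mul_assoc]

lemma iota_prodD (hιD : ∀ i, i + 1 < n → ι (D i) = -D i) :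
    ∀ L : List ℕ, (∀ i ∈ L, i + 1 < n) →
      ι ((L.map D).prod) = sg L.length * (L.map D).prod := by
  intro L
  induction L with
  | nil => simp [sg]
  | cons a L ih =>
    intro h
    obtain ⟨ha, hL⟩ := List.forall_mem_cons.mp h
    calc ι (((a :: L).map D).prod) = ι (D a) * ι ((L.map D).prod) := by simp
      _ = (-D a) * (sg L.length * (L.map D).prod) := by rw [hιD a ha, ih hL]
      _ = sg (L.length + 1) * (((a :: L).map D).prod) := by
          rw [sg_succ]
          simp only [List.map_cons, List.prod_cons, neg_mul, neg_inj]
          rw [← mul_assoc, ← sg_comm, mul_assoc]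
          

lemma iota_Ws (hιD : ∀ i, i + 1 < n → ι (D i) = -D i) (m : ℕ) (hm : m ≤ n) :
    ι (Ws D m) = sg (w0List m).length * Ws D m := by
  apply iota_prodD hιD
  intro i hi
  have := mem_w0 m i hi
  omega

lemma d_zero (hd_add : ∀ a b, d (a + b) = d a + d b) : d 0 = (0 : A) := by
  have h := hd_add 0 0
  rw [add_zero] at h
  exact (left_eq_add.mp h)


lemma flip_sg {k : ℕ} {a b : A} (h : a * b = sg k * (b * a)) : b * a = sg k * (a * b) := by
  rw [h, ← mul_assoc, sg_mul_self, one_mul]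

lemma sg_pull (k : ℕ) (a b : A) : a * (sg k * b) = sg k * (a * b) := by
  rw [← mul_assoc, ← sg_comm, mul_assoc]

lemma sg_two_add (k : ℕ) : (sg (k+2) : A) = sg k := by
  rw [sg_succ, sg_succ, neg_neg]

variable (hDx : ∀ i j, i + 1 < n → j < n → j ≠ i → j ≠ i + 1 → D i * x j = -(x j * D i))
variable (hDD : ∀ i j, i + 1 < n → j + 1 < n → (i + 1 < j ∨ j + 1 < i) → D i * D j = -(D j * D i))
variable (hD2 : ∀ i, i + 1 < n → D i * D i = 0)
variable (hbraid : ∀ i, i + 2 < n → D i * D (i + 1) * D i = D (i + 1) * D i * D (i + 1))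
variable (hmixa : ∀ i, i + 1 < n → x i * D i + D i * x (i + 1) = 1)
variable (hmixb : ∀ i, i + 1 < n → D i * x i + x (i + 1) * D i = 1)

include hD2 in
lemma VD0 (m : ℕ) (hm : m < n) (hm1 : 1 ≤ m) : Vv D m * D 0 = 0 := by
  rw [Vv_eq_aseg, aseg_cons D 0 m hm1, mul_assoc, hD2 0 (by omega), mul_zero]

/-- membership bound for `Aseg` letters -/
lemma mem_aseg {k m i : ℕ} (h : i ∈ (List.range' k (m - k)).reverse) : k ≤ i ∧ i < m := by
  rw [List.mem_reverse, List.mem_range'_1] at h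
  omega

include hDD hbraid in
lemma VDrel : ∀ m j, m < n → j + 2 ≤ m → Vv D m * D (j+1) = sg m * (D j * Vv D m) := by
  intro m
  induction m with
  | zero => intro j _ h; omega
  | succ m ih =>
    intro j hm hj
    rcases Nat.lt_or_ge (j + 2) (m + 1) with hcase | hcase
    · -- j + 2 ≤ m
      have h1 : Vv D m * D (j+1) = sg m * (D j * Vv D m) := ih j (by omega) (by omega)
      calc Vv D (m+1) * D (j+1) = D m * (Vv D m * D (j+1)) := by rw [Vv_succ, mul_assoc]
        _ = D m * (sg m * (D j * Vv D m)) := by rw [h1]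
        _ = sg m * ((D m * D j) * Vv D m) := by
            rw [sg_pull]; simp [mul_assoc]
        _ = sg m * (-(D j * D m) * Vv D m) := by
            rw [hDD m j (by omega) (by omega) (by omega)]
        _ = sg (m+1) * (D j * Vv D (m+1)) := by
            rw [sg_succ, Vv_succ]
            simp [mul_assoc]
    · -- j + 2 = m + 1, i.e. m = j + 1
      have hm' : m = j + 1 := by omega
      subst hm'
      have hcm : Vv D j * D (j+1) = sg j * (D (j+1) * Vv D j) := by
        have := prodD_comm_D hDD (j+1) (by omega) ((List.range j).reverse.map id)
        simp only [List.map_id, List.length_reverse, List.length_range] at this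
        exact this (by
          intro i hi
          rw [List.mem_reverse, List.mem_range] at hi
          omega)
      calc Vv D (j+2) * D (j+1) = D (j+1) * D j * (Vv D j * D (j+1)) := by
            rw [Vv_succ, Vv_succ, mul_assoc, mul_assoc, mul_assoc]
        _ = D (j+1) * D j * (sg j * (D (j+1) * Vv D j)) := by rw [hcm]
        _ = sg j * ((D (j+1) * D j * D (j+1)) * Vv D j) := by
            rw [sg_pull]; simp [mul_assoc]
        _ = sg j * ((D j * D (j+1) * D j) * Vv D j) := by
            rw [← hbraid j (by omega)]
        _ = sg (j+2) * (D j * Vv D (j+2)) := by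
            rw [sg_two_add, Vv_succ, Vv_succ]
            simp [mul_assoc]

include hDD hD2 hbraid in
lemma WD : ∀ m, m ≤ n → ∀ j, j + 2 ≤ m → Ws D m * D j = 0 := by
  intro m
  induction m with
  | zero => intro _ j h; omega
  | succ m ih =>
    intro hm j hj
    rw [Ws_succ, mul_assoc]
    match j with
    | 0 => rw [VD0 hD2 m (by omega) (by omega), mul_zero]
    | (j'+1) =>
      rw [VDrel hDD hbraid m j' (by omega) (by omega), ← mul_assoc, ← sg_comm,
        mul_assoc, ← mul_assoc (Ws D m), ih (by omega) j' (by omega)]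
      simp

include hDD hD2 hbraid in
lemma Wzero (k m : ℕ) (hm : m < n) (hk1 : 1 ≤ k) (hkm : k < m) :
    Ws D m * (Aseg D (k+1) m * Vv D k) = 0 := by
  obtain ⟨k', rfl⟩ : ∃ k'', k = k'' + 1 := ⟨k - 1, by omega⟩
  have hcm : Aseg D (k'+1+1) m * D k' = sg (m - (k'+1+1)) * (D k' * Aseg D (k'+1+1) m) := by
    have h0 := prodD_comm_D hDD k' (by omega) (List.range' (k'+1+1) (m - (k'+1+1))).reverse
    simp only [List.length_reverse, List.length_range'] at h0
    exact h0 (by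
      intro i hi
      have h1 := mem_aseg hi
      refine ⟨by omega, by omega⟩)
  have hw : Ws D m * D k' = 0 := WD hDD hD2 hbraid m (by omega) k' (by omega)
  rw [Vv_succ, ← mul_assoc (Aseg D (k'+1+1) m), hcm]
  simp only [mul_assoc]
  rw [sg_pull, ← mul_assoc (Ws D m), hw, zero_mul, mul_zero]

include hDx hmixa in
lemma xiV (i m : ℕ) (hm : m < n) (him : i < m) :
    x i * Vv D m = sg (m - (i+1)) * (Aseg D (i+1) m * Vv D i) - sg (m+1) * (Vv D m * x (i+1)) := by
  have hsplit : Vv D m = Aseg D (i+1) m * (D i * Vv D i) := by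
    rw [Vv_aseg_split D (i+1) m (by omega), Vv_succ]
  have hcomm1 : x i * Aseg D (i+1) m = sg (m - (i+1)) * (Aseg D (i+1) m * x i) := by
    apply flip_sg
    have h0 := prodD_comm_x hDx i (by omega) (List.range' (i+1) (m - (i+1))).reverse
    simp only [List.length_reverse, List.length_range'] at h0
    exact h0 (by
      intro i' hi'
      have h1 := mem_aseg hi'
      refine ⟨by omega, by omega, by omega⟩)
  have hcomm2 : x (i+1) * Vv D i = sg i * (Vv D i * x (i+1)) := by
    apply flip_sg
    have := prodD_comm_x hDx (i+1) (by omega) (List.range i).reverse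
    simp only [List.length_reverse, List.length_range] at this
    exact this (by
      intro i' hi'
      rw [List.mem_reverse, List.mem_range] at hi'
      refine ⟨by omega, by omega, by omega⟩)
  have hxd : x i * D i = 1 - D i * x (i+1) :=
    eq_sub_of_add_eq (hmixa i (by omega))
  calc x i * Vv D m = (x i * Aseg D (i+1) m) * (D i * Vv D i) := by rw [hsplit, mul_assoc]
    _ = sg (m - (i+1)) * (Aseg D (i+1) m * ((x i * D i) * Vv D i)) := by
        rw [hcomm1]; simp [mul_assoc]
    _ = sg (m - (i+1)) * (Aseg D (i+1) m * (Vv D i - D i * (x (i+1) * Vv D i))) := by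
        rw [hxd]; simp [sub_mul, mul_assoc]
    _ = sg (m - (i+1)) * (Aseg D (i+1) m * Vv D i)
        - sg (m - (i+1)) * (Aseg D (i+1) m * (D i * (sg i * (Vv D i * x (i+1))))) := by
        rw [hcomm2, mul_sub, mul_sub]
    _ = sg (m - (i+1)) * (Aseg D (i+1) m * Vv D i)
        - (sg (m - (i+1)) * sg i) * ((Aseg D (i+1) m * (D i * Vv D i)) * x (i+1)) := by
        congr 1
        rw [sg_pull i (D i), sg_pull i (Aseg D (i+1) m), sg_pull i (sg (m - (i+1))),
          ← mul_assoc, ← mul_assoc, sg_comm i (sg (m - (i+1)))]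
        simp [mul_assoc]
    _ = sg (m - (i+1)) * (Aseg D (i+1) m * Vv D i) - sg (m+1) * (Vv D m * x (i+1)) := by
        rw [← hsplit, ← sg_add]
        have h1 : m - (i+1) + i = m - 1 := by omega
        have h2 : (sg (m+1) : A) = sg (m-1) := by
          have h3 : m + 1 = (m-1) + 2 := by omega
          rw [h3, sg_two_add]
        rw [h1, h2]

lemma sg_one : (sg 1 : A) = -1 := by simp [sg]

lemma sg_succ_succ (k : ℕ) : (sg (k+1+1) : A) = sg k := sg_two_add k

lemma neg_sg_succ (k : ℕ) (a : A) : -(sg (k+1) * a) = sg k * a := by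
  rw [sg_succ, neg_mul, neg_neg]

include hDx hDD hD2 hbraid hmixa in
lemma WxV_pos (i m : ℕ) (hm : m < n) (hi1 : 1 ≤ i) (him : i < m) :
    Ws D m * (x i * Vv D m) = sg m * (Ws D (m+1) * x (i+1)) := by
  rw [xiV hDx hmixa i m hm him, mul_sub, sg_pull, sg_pull,
    Wzero hDD hD2 hbraid i m hm hi1 him, mul_zero, zero_sub,
    ← mul_assoc (Ws D m), ← Ws_succ, neg_sg_succ]

include hDx hDD hD2 hbraid hmixa in
lemma WxV_zero (m : ℕ) (hm : m < n) (hm1 : 1 ≤ m) :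
    Ws D m * (x 0 * Vv D m) = sg (m+1) * (Ws D m * Aseg D 1 m) + sg m * (Ws D (m+1) * x 1) := by
  rw [xiV hDx hmixa 0 m hm (by omega), mul_sub, sg_pull, sg_pull]
  simp only [zero_add, Vv_zero, mul_one]
  rw [← mul_assoc (Ws D m), ← Ws_succ, sub_eq_add_neg, neg_sg_succ]
  have h1 : (sg (m - 1) : A) = sg (m+1) := by
    have h3 : m + 1 = (m - 1) + 2 := by omega
    rw [h3, sg_two_add]
  rw [h1]

include hDx hDD hD2 hbraid hmixb in
lemma chainS (m : ℕ) (hm : m < n) (hm1 : 1 ≤ m) : ∀ k, 1 ≤ k → k ≤ m →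
    Ws D (m+1) * x 0 = Ws D m * Aseg D 1 m + sg k * (Ws D m * (Aseg D k m * (x k * Vv D k))) := by
  intro k
  induction k with
  | zero => omega
  | succ k ih =>
    intro _ hkm
    rcases Nat.eq_zero_or_pos k with hk0 | hk0
    · subst hk0
      have hb : D 0 * x 0 = 1 - x 1 * D 0 := eq_sub_of_add_eq (hmixb 0 (by omega))
      have h1 : Vv D m = Aseg D 1 m * D 0 := by
        have h2 := aseg_cons D 0 m (by omega)
        rw [Vv_eq_aseg, h2]
      simp only [zero_add]
      rw [Ws_succ, mul_assoc, h1, mul_assoc, hb, mul_sub, mul_one, mul_sub, ← Vv_one (D := D)]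
      rw [sub_eq_add_neg, sg_one, neg_one_mul]
    · have hb : D k * x k = 1 - x (k+1) * D k := eq_sub_of_add_eq (hmixb k (by omega))
      have e1 : Aseg D k m * (x k * Vv D k)
          = Aseg D (k+1) m * Vv D k - Aseg D (k+1) m * (x (k+1) * Vv D (k+1)) := by
        calc Aseg D k m * (x k * Vv D k)
            = Aseg D (k+1) m * ((D k * x k) * Vv D k) := by
              rw [aseg_cons D k m (by omega)]
              simp [mul_assoc]
          _ = Aseg D (k+1) m * (Vv D k - x (k+1) * (D k * Vv D k)) := by
              rw [hb, sub_mul, one_mul, mul_assoc]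
          _ = Aseg D (k+1) m * Vv D k - Aseg D (k+1) m * (x (k+1) * Vv D (k+1)) := by
              rw [mul_sub, Vv_succ]
      rw [ih hk0 (by omega), e1, mul_sub, mul_sub]
      rw [Wzero hDD hD2 hbraid k m hm hk0 (by omega), mul_zero, zero_sub, sg_succ, neg_mul]

include hDx hDD hD2 hbraid hmixb in
lemma keyU (m : ℕ) (hm : m < n) (hm1 : 1 ≤ m) :
    Ws D (m+1) * x 0 = Ws D m * Aseg D 1 m
      + sg (m + (w0List m).length) * (x m * Ws D (m+1)) := by
  have h := chainS hDx hDD hD2 hbraid hmixb m hm hm1 m hm1 le_rfl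
  rw [h, aseg_nil D m m le_rfl, one_mul]
  congr 1
  have hwx : Ws D m * x m = sg (w0List m).length * (x m * Ws D m) := by
    have h0 := prodD_comm_x hDx m (by omega) (w0List m)
    exact h0 (by
      intro i hi
      have h1 := mem_w0 m i hi
      refine ⟨by omega, by omega, by omega⟩)
  rw [← mul_assoc (Ws D m) (x m), hwx, mul_assoc (sg (w0List m).length), mul_assoc (x m),
    ← Ws_succ, ← mul_assoc, ← sg_add]

lemma d_one (hd_leib : ∀ a b, d (a * b) = d a * b + ι a * d b) : d (1 : A) = 0 := by
  have h := hd_leib 1 1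
  rw [mul_one, map_one, one_mul, mul_one] at h
  exact left_eq_add.mp h

include hDx hmixa in
lemma dV (hd_leib : ∀ a b, d (a * b) = d a * b + ι a * d b)
    (hdD : ∀ i, i + 1 < n → d (D i) = 1)
    (hιD : ∀ i, i + 1 < n → ι (D i) = -D i) :
    ∀ m, m < n → d (Vv D m) = (∑ i ∈ Finset.range m, x i * Vv D m)
      + sg (m+1) * ∑ i ∈ Finset.range m, Vv D m * x (i+1) := by
  intro m
  induction m with
  | zero => simp [Vv_zero, d_one (ι := ι) hd_leib]
  | succ m ih =>
    intro hm
    have hL6d : Vv D m = x m * Vv D (m+1) + sg m * (Vv D (m+1) * x (m+1)) := by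
      have hxa : x m * D m = 1 - D m * x (m+1) := eq_sub_of_add_eq (hmixa m hm)
      have hcomm : x (m+1) * Vv D m = sg m * (Vv D m * x (m+1)) := by
        apply flip_sg
        have h0 := prodD_comm_x hDx (m+1) (by omega) (List.range m).reverse
        simp only [List.length_reverse, List.length_range] at h0
        exact h0 (by
          intro i hi
          rw [List.mem_reverse, List.mem_range] at hi
          exact ⟨by omega, by omega, by omega⟩)
      have e1 : x m * Vv D (m+1) = Vv D m - sg m * (Vv D (m+1) * x (m+1)) := by
        calc x m * Vv D (m+1) = (x m * D m) * Vv D m := by rw [Vv_succ, mul_assoc]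
          _ = Vv D m - D m * (x (m+1) * Vv D m) := by
              rw [hxa, sub_mul, one_mul, mul_assoc]
          _ = Vv D m - sg m * (Vv D (m+1) * x (m+1)) := by
              rw [hcomm, sg_pull, Vv_succ, mul_assoc]
      rw [e1]; abel
    have hA : D m * (∑ i ∈ Finset.range m, x i * Vv D m)
        = -∑ i ∈ Finset.range m, x i * Vv D (m+1) := by
      rw [Finset.mul_sum, ← Finset.sum_neg_distrib]
      apply Finset.sum_congr rfl
      intro i hi
      rw [Finset.mem_range] at hi
      have hd := hDx m i (by omega) (by omega) (by omega) (by omega)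
      rw [← mul_assoc, hd, neg_mul, mul_assoc, ← Vv_succ]
    have hB : D m * (∑ i ∈ Finset.range m, Vv D m * x (i+1))
        = ∑ i ∈ Finset.range m, Vv D (m+1) * x (i+1) := by
      rw [Finset.mul_sum]
      apply Finset.sum_congr rfl
      intro i _
      rw [← mul_assoc, ← Vv_succ]
    have hstep : d (Vv D (m+1)) = Vv D m
        + ((∑ i ∈ Finset.range m, x i * Vv D (m+1))
          + sg (m+1+1) * ∑ i ∈ Finset.range m, Vv D (m+1) * x (i+1)) := by
      conv_lhs => rw [Vv_succ]
      rw [hd_leib, hdD m hm, one_mul, hιD m hm, ih (by omega)]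
      congr 1
      rw [neg_mul, mul_add, hA, sg_pull, hB, neg_add, neg_neg, sg_succ (m+1), neg_mul]
    rw [hstep, hL6d, Finset.sum_range_succ, Finset.sum_range_succ, sg_succ_succ, mul_add]
    abel

lemma br_even {k : ℕ} (h : Even k) : (br k : A) = 0 := if_pos h
lemma br_odd {k : ℕ} (h : ¬ Even k) : (br k : A) = 1 := if_neg h
lemma sg_even {k : ℕ} (h : Even k) : (sg k : A) = 1 := h.neg_one_pow
lemma sg_odd {k : ℕ} (h : ¬ Even k) : (sg k : A) = -1 :=
  (Nat.not_even_iff_odd.mp h).neg_one_pow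

include hDx hDD hD2 hbraid hmixa in
lemma sumWxV (m : ℕ) (hm : m < n) (hm1 : 1 ≤ m) :
    ∑ i ∈ Finset.range m, br (m-i) * (Ws D m * (x i * Vv D m))
    = sg m * (∑ i ∈ Finset.range m, br (m-i) * (Ws D (m+1) * x (i+1)))
      + br m * (sg (m+1) * (Ws D m * Aseg D 1 m)) := by
  obtain ⟨m', rfl⟩ : ∃ m'', m = m'' + 1 := ⟨m-1, by omega⟩
  rw [Finset.sum_range_succ' (fun i => br (m'+1-i) * (Ws D (m'+1) * (x i * Vv D (m'+1)))) m',
      Finset.sum_range_succ' (fun i => br (m'+1-i) * (Ws D (m'+1+1) * x (i+1))) m']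
  have hpt : ∀ i ∈ Finset.range m', br (m'+1-(i+1)) * (Ws D (m'+1) * (x (i+1) * Vv D (m'+1)))
      = sg (m'+1) * (br (m'+1-(i+1)) * (Ws D (m'+1+1) * x (i+1+1))) := by
    intro i hi
    rw [Finset.mem_range] at hi
    rw [WxV_pos hDx hDD hD2 hbraid hmixa (i+1) (m'+1) hm (by omega) (by omega)]
    rw [← mul_assoc, br_comm, mul_assoc]
  rw [Finset.sum_congr rfl hpt, WxV_zero hDx hDD hD2 hbraid hmixa (m'+1) hm hm1]
  rw [← Finset.mul_sum]
  simp only [Nat.sub_zero, zero_add]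
  rw [mul_add (br (m'+1)), mul_add (sg (m'+1))]
  have hsw : br (m'+1) * (sg (m'+1) * (Ws D (m'+1+1) * x 1))
      = sg (m'+1) * (br (m'+1) * (Ws D (m'+1+1) * x 1)) := by
    rw [← mul_assoc, br_comm, mul_assoc]
  rw [hsw]
  abel

include hDx hDD hD2 hbraid hmixa hmixb in
lemma dW (hd_leib : ∀ a b, d (a * b) = d a * b + ι a * d b)
    (hdD : ∀ i, i + 1 < n → d (D i) = 1)
    (hιD : ∀ i, i + 1 < n → ι (D i) = -D i) :
    ∀ m, m ≤ n → d (Ws D m) = (∑ i ∈ Finset.range m, br i * (x i * Ws D m))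
      - sg (w0List m).length * ∑ i ∈ Finset.range m, br (m-1-i) * (Ws D m * x i) := by
  intro m
  induction m with
  | zero => intro _; simp [Ws_zero, d_one (ι := ι) hd_leib, w0List]
  | succ m ih =>
    intro hm
    rcases Nat.eq_zero_or_pos m with hm0 | hm1
    · subst hm0
      simp [Ws_one, d_one (ι := ι) hd_leib, br, w0List]
    · -- main case
      have h1 : (∑ i ∈ Finset.range m, br i * (x i * Ws D m)) * Vv D m
          = ∑ i ∈ Finset.range m, br i * (x i * Ws D (m+1)) := by
        rw [Finset.sum_mul]
        apply Finset.sum_congr rfl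
        intro i _
        rw [mul_assoc, mul_assoc, ← Ws_succ]
      have h2 : (∑ i ∈ Finset.range m, br (m-1-i) * (Ws D m * x i)) * Vv D m
          = ∑ i ∈ Finset.range m, br (m-1-i) * (Ws D m * (x i * Vv D m)) := by
        rw [Finset.sum_mul]
        apply Finset.sum_congr rfl
        intro i _
        rw [mul_assoc, mul_assoc]
      have h3 : Ws D m * (∑ i ∈ Finset.range m, x i * Vv D m)
          = ∑ i ∈ Finset.range m, Ws D m * (x i * Vv D m) := Finset.mul_sum _ _ _
      have h4 : Ws D m * (sg (m+1) * ∑ i ∈ Finset.range m, Vv D m * x (i+1))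
          = sg (m+1) * ∑ i ∈ Finset.range m, Ws D (m+1) * x (i+1) := by
        rw [sg_pull, Finset.mul_sum]
        congr 1
        apply Finset.sum_congr rfl
        intro i _
        rw [← mul_assoc, ← Ws_succ]
      have hComb : sg (w0List m).length
            * ∑ i ∈ Finset.range m, br (m-i) * (Ws D m * (x i * Vv D m))
          = sg (w0List m).length * ∑ i ∈ Finset.range m, Ws D m * (x i * Vv D m)
            - sg (w0List m).length
              * ∑ i ∈ Finset.range m, br (m-1-i) * (Ws D m * (x i * Vv D m)) := by
        rw [← mul_sub]
        congr 1
        rw [← Finset.sum_sub_distrib]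
        apply Finset.sum_congr rfl
        intro i hi
        rw [Finset.mem_range] at hi
        have hb : (br (m-i) : A) = 1 - br (m-1-i) := by
          have h : m - i = (m-1-i)+1 := by omega
          rw [h, br_succ]
        rw [hb, sub_mul, one_mul]
      have hMain : d (Ws D (m+1)) = (∑ i ∈ Finset.range m, br i * (x i * Ws D (m+1)))
          + (sg (w0List m).length
              * ∑ i ∈ Finset.range m, br (m-i) * (Ws D m * (x i * Vv D m))
            + sg (w0List m).length
              * (sg (m+1) * ∑ i ∈ Finset.range m, Ws D (m+1) * x (i+1))) := by
        have h0 : d (Ws D (m+1)) = d (Ws D m) * Vv D m + ι (Ws D m) * d (Vv D m) := by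
          conv_lhs => rw [Ws_succ]
          exact hd_leib _ _
        rw [h0, ih (by omega), iota_Ws hιD m (by omega),
          dV hDx hmixa hd_leib hdD hιD m (by omega)]
        rw [sub_mul, h1, mul_assoc (sg (w0List m).length), h2,
          mul_assoc (sg (w0List m).length), mul_add (Ws D m), h3, h4,
          mul_add (sg (w0List m).length), hComb]
        abel
      have hStar2 : (∑ i ∈ Finset.range m, br (m-i) * (Ws D (m+1) * x (i+1)))
          = (∑ i ∈ Finset.range m, Ws D (m+1) * x (i+1))
            - ∑ i ∈ Finset.range m, br (m-(i+1)) * (Ws D (m+1) * x (i+1)) := by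
        rw [← Finset.sum_sub_distrib]
        apply Finset.sum_congr rfl
        intro i hi
        rw [Finset.mem_range] at hi
        have hb : (br (m-i) : A) = 1 - br (m-(i+1)) := by
          have h : m - i = (m-(i+1))+1 := by omega
          rw [h, br_succ]
        rw [hb, sub_mul, one_mul]
      have hA1 : Ws D m * Aseg D 1 m
          = Ws D (m+1) * x 0 - sg (m + (w0List m).length) * (x m * Ws D (m+1)) := by
        rw [keyU hDx hDD hD2 hbraid hmixb m (by omega) hm1]
        abel
      rw [hMain, sumWxV hDx hDD hD2 hbraid hmixa m (by omega) hm1, hStar2, hA1, w0_len_succ]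
      have hidx : ∀ i : ℕ, m + 1 - 1 - i = m - i := by intro i; omega
      simp only [hidx]
      rw [Finset.sum_range_succ (fun i => br i * (x i * Ws D (m+1))) m,
        Finset.sum_range_succ' (fun i => br (m-i) * (Ws D (m+1) * x i)) m]
      simp only [Nat.sub_zero]
      by_cases hEm : Even m <;> by_cases hEL : Even (w0List m).length <;>
        simp [sg_even, sg_odd, br_even, br_odd, Nat.even_add, Nat.even_add_one, hEm, hEL,
          mul_sub, mul_add, sub_mul, add_mul] <;>
        abel

lemma br_pull (k : ℕ) (a b : A) : a * (br k * b) = br k * (a * b) := by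
  rw [← mul_assoc, ← br_comm, mul_assoc]

lemma d_neg (hd_add : ∀ a b, d (a + b) = d a + d b) (a : A) : d (-a) = - d a := by
  have h := hd_add a (-a)
  rw [add_neg_cancel, d_zero hd_add] at h
  exact (eq_neg_of_add_eq_zero_right h.symm)

variable (hxx : ∀ i j, i < n → j < n → i ≠ j → x i * x j = -(x j * x i))
variable (hιx : ∀ i, i < n → ι (x i) = -x i)
variable (hdx : ∀ i, i < n → d (x i) = x i ^ 2)

include hιx in
lemma iota_xpow (i k : ℕ) (hi : i < n) : ι (x i ^ k) = sg k * x i ^ k := by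
  induction k with
  | zero => simp [sg]
  | succ k ih =>
    rw [pow_succ, map_mul, ih, hιx i hi, mul_neg, mul_assoc, ← pow_succ, sg_succ, neg_mul]

include hιx hdx in
lemma dxpow (hd_leib : ∀ a b, d (a * b) = d a * b + ι a * d b) (i k : ℕ) (hi : i < n) :
    d (x i ^ k) = br k * x i ^ (k+1) := by
  induction k with
  | zero =>
    rw [pow_zero, d_one (ι := ι) hd_leib, br_even (Even.zero), zero_mul]
  | succ k ih =>
    rw [pow_succ', hd_leib, hdx i hi, hιx i hi, ih]
    have e1 : (x i)^2 * x i ^ k = x i ^ (k+1+1) := by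
      rw [← pow_add]
      congr 1
      omega
    have e2 : -x i * (br k * x i ^ (k+1)) = -(br k * x i ^ (k+1+1)) := by
      rw [neg_mul, ← mul_assoc, ← br_comm, mul_assoc, ← pow_succ']
    rw [e1, e2, br_succ, sub_mul, one_mul, sub_eq_add_neg]

include hxx in
lemma xpow_comm (i j a : ℕ) (hi : i < n) (hj : j < n) (hij : i ≠ j) :
    x i ^ a * x j = sg a * (x j * x i ^ a) := by
  induction a with
  | zero => simp [sg]
  | succ a ih =>
    calc x i ^ (a+1) * x j = x i * (x i ^ a * x j) := by rw [pow_succ', mul_assoc]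
      _ = sg a * ((x i * x j) * x i ^ a) := by rw [ih, sg_pull, ← mul_assoc (x i)]
      _ = sg (a+1) * (x j * x i ^ (a+1)) := by
          rw [hxx i j hi hj hij, sg_succ, pow_succ']
          simp [mul_assoc]

def Px (x : ℕ → A) (e : ℕ → ℕ) (k : ℕ) : A := ((List.range k).map fun i => x i ^ e i).prod

lemma Px_zero (e : ℕ → ℕ) : Px x e 0 = 1 := rfl

lemma Px_succ (e : ℕ → ℕ) (k : ℕ) : Px x e (k+1) = Px x e k * x k ^ e k := by
  simp [Px, List.range_succ]

include hιx in
lemma iota_Px (e : ℕ → ℕ) : ∀ k, k ≤ n →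
    ι (Px x e k) = sg (∑ i ∈ Finset.range k, e i) * Px x e k := by
  intro k
  induction k with
  | zero => simp [Px_zero, sg]
  | succ k ih =>
    intro hk
    rw [Px_succ, map_mul, ih (by omega), iota_xpow hιx k (e k) (by omega),
      Finset.sum_range_succ, sg_add, mul_assoc (sg (∑ i ∈ Finset.range k, e i)), sg_pull,
      ← mul_assoc, ← mul_assoc, mul_assoc (sg (∑ i ∈ Finset.range k, e i) * sg (e k))]

include hxx in
lemma Px_comm_x (e : ℕ → ℕ) (j : ℕ) (hj : j < n) : ∀ k, k ≤ n → k ≤ j →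
    Px x e k * x j = sg (∑ i ∈ Finset.range k, e i) * (x j * Px x e k) := by
  intro k
  induction k with
  | zero => simp [Px_zero, sg]
  | succ k ih =>
    intro hk hkj
    calc Px x e (k+1) * x j = Px x e k * (x k ^ e k * x j) := by rw [Px_succ, mul_assoc]
      _ = sg (e k) * ((Px x e k * x j) * x k ^ e k) := by
          rw [xpow_comm hxx k j (e k) (by omega) hj (by omega), sg_pull,
            ← mul_assoc (Px x e k)]
      _ = sg (e k) * (sg (∑ i ∈ Finset.range k, e i) * ((x j * Px x e k) * x k ^ e k)) := by
          rw [ih (by omega) (by omega), mul_assoc (sg (∑ i ∈ Finset.range k, e i))]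
      _ = sg (∑ i ∈ Finset.range (k+1), e i) * (x j * Px x e (k+1)) := by
          rw [Finset.sum_range_succ, sg_add, Px_succ]
          rw [← mul_assoc (sg (e k)), sg_comm (e k)]
          simp [mul_assoc]

include hxx hιx hdx in
lemma dX (hd_leib : ∀ a b, d (a * b) = d a * b + ι a * d b) (e : ℕ → ℕ) : ∀ k, k ≤ n →
    d (Px x e k) = ∑ i ∈ Finset.range k, br (e i) * (x i * Px x e k) := by
  intro k
  induction k with
  | zero => simp [Px_zero, d_one (ι := ι) hd_leib]
  | succ k ih =>
    intro hk
    have hsum : (∑ i ∈ Finset.range k, br (e i) * (x i * Px x e k)) * (x k ^ e k)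
        = ∑ i ∈ Finset.range k, br (e i) * (x i * Px x e (k+1)) := by
      rw [Finset.sum_mul]
      apply Finset.sum_congr rfl
      intro i _
      rw [mul_assoc, mul_assoc, ← Px_succ]
    have hterm : ι (Px x e k) * d (x k ^ e k) = br (e k) * (x k * Px x e (k+1)) := by
      rw [iota_Px hιx e k (by omega), dxpow hιx hdx hd_leib k (e k) (by omega), pow_succ']
      rw [mul_assoc (sg (∑ i ∈ Finset.range k, e i)), br_pull, br_pull]
      rw [← mul_assoc (Px x e k), Px_comm_x hxx e k (by omega) k (by omega) le_rfl]
      rw [mul_assoc (sg (∑ i ∈ Finset.range k, e i)) (x k * Px x e k),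
        ← mul_assoc (sg (∑ i ∈ Finset.range k, e i)) (sg (∑ i ∈ Finset.range k, e i)),
        sg_mul_self, one_mul, mul_assoc, ← Px_succ]
    conv_lhs => rw [Px_succ]
    rw [hd_leib, ih (by omega), hsum, hterm, Finset.sum_range_succ]

end Rels
end S9


/-- In `ONH_n` with the local differential (`d(x_i) = x_i²`,
`d(∂_i) = 1`), the idempotent `𝚎_n = (−1)^{C(n,3)} ∂_{w_0} x^δ` satisfies
`d(𝚎_n) = Σ_{i=1}^n {i−1} x_i 𝚎_n` (written here 0-indexed, `{m}` being `0`
for `m` even and `1` for `m` odd). -/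
theorem stmt9 {A : Type*} [Ring A] (n : ℕ) (x D : ℕ → A)
    (hxx : ∀ i j, i < n → j < n → i ≠ j → x i * x j = -(x j * x i))
    (hDDdist : ∀ i j, i + 1 < n → j + 1 < n → (i + 1 < j ∨ j + 1 < i) →
      D i * D j = -(D j * D i))
    (hD2 : ∀ i, i + 1 < n → D i * D i = 0)
    (hbraid : ∀ i, i + 2 < n → D i * D (i + 1) * D i = D (i + 1) * D i * D (i + 1))
    (hDx : ∀ i j, i + 1 < n → j < n → j ≠ i → j ≠ i + 1 → D i * x j = -(x j * D i))
    (hmixa : ∀ i, i + 1 < n → x i * D i + D i * x (i + 1) = 1)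
    (hmixb : ∀ i, i + 1 < n → D i * x i + x (i + 1) * D i = 1)
    (ι : A →+* A) (hιx : ∀ i, i < n → ι (x i) = -x i)
    (hιD : ∀ i, i + 1 < n → ι (D i) = -D i)
    (d : A → A)
    (hd_add : ∀ a b, d (a + b) = d a + d b)
    (hd_leib : ∀ a b, d (a * b) = d a * b + ι a * d b)
    (hdx : ∀ i, i < n → d (x i) = x i ^ 2)
    (hdD : ∀ i, i + 1 < n → d (D i) = 1) :
    d (onhIdem n x D) =
      ∑ i ∈ Finset.range n, (if Even i then (0 : A) else 1) *
        (x i * onhIdem n x D) := by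
  classical
  have hWX : d (((w0List n).map D).prod * xDeltaN n x)
      = ∑ i ∈ Finset.range n,
          S9.br i * (x i * (((w0List n).map D).prod * xDeltaN n x)) := by
    show d (S9.Ws D n * S9.Px x (fun i => n - 1 - i) n)
      = ∑ i ∈ Finset.range n, S9.br i * (x i * (S9.Ws D n * S9.Px x (fun i => n - 1 - i) n))
    have hdX : d (S9.Px x (fun i => n - 1 - i) n)
        = ∑ i ∈ Finset.range n, S9.br (n-1-i) * (x i * S9.Px x (fun i => n - 1 - i) n) :=
      S9.dX hxx hιx hdx hd_leib (fun i => n - 1 - i) n le_rfl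
    have hdW := S9.dW hDx hDDdist hD2 hbraid hmixa hmixb hd_leib hdD hιD n le_rfl
    have k1 : (∑ i ∈ Finset.range n, S9.br i * (x i * S9.Ws D n))
          * S9.Px x (fun i => n-1-i) n
        = ∑ i ∈ Finset.range n,
            S9.br i * (x i * (S9.Ws D n * S9.Px x (fun i => n-1-i) n)) := by
      rw [Finset.sum_mul]
      apply Finset.sum_congr rfl
      intro i _
      rw [mul_assoc, mul_assoc]
    have k2 : (∑ i ∈ Finset.range n, S9.br (n-1-i) * (S9.Ws D n * x i))
          * S9.Px x (fun i => n-1-i) n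
        = ∑ i ∈ Finset.range n,
            S9.br (n-1-i) * (S9.Ws D n * (x i * S9.Px x (fun i => n-1-i) n)) := by
      rw [Finset.sum_mul]
      apply Finset.sum_congr rfl
      intro i _
      rw [mul_assoc, mul_assoc]
    have k3 : S9.Ws D n
          * (∑ i ∈ Finset.range n, S9.br (n-1-i) * (x i * S9.Px x (fun i => n-1-i) n))
        = ∑ i ∈ Finset.range n,
            S9.br (n-1-i) * (S9.Ws D n * (x i * S9.Px x (fun i => n-1-i) n)) := by
      rw [Finset.mul_sum]
      apply Finset.sum_congr rfl
      intro i _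
      rw [S9.br_pull]
    rw [hd_leib, hdW, S9.iota_Ws hιD n le_rfl, hdX]
    rw [sub_mul, k1, mul_assoc (S9.sg (w0List n).length), k2,
      mul_assoc (S9.sg (w0List n).length), k3]
    abel
  simp only [onhIdem]
  have hWX' := hWX
  simp only [S9.br] at hWX'
  rcases Nat.even_or_odd (n.choose 3) with hc | hc
  · simp only [hc.neg_one_pow, one_mul]
    exact hWX'
  · simp only [hc.neg_one_pow, neg_one_mul, mul_neg]
    rw [S9.d_neg hd_add, hWX', ← Finset.sum_neg_distrib]
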